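/- Let G be a finite connected unweighted graph with diameter D ≥ 1, and for an s-t graph G' define tri(G') = max over v ∈ V(G') of (d_{G'}(s(G'), v) + d_{G'}(v, t(G'))). Then for every k ≥ 1, tri(G̃^{⊘k}) ≤ len(G̃^{⊘k}) · (1 + 1/(9D − 1)). -/

import Mathlib

open scoped ENNReal

/-- Cost of a chain (list of vertices): sum of the length function over consecutive pairs. -/
noncomputable def chainCost {α : Type} (len : α → α → ℝ≥0∞) : List α → ℝ≥0∞
  | a :: b :: l => len a b + chainCost len (b :: l)
  | _ => 0
  termination_by l => l.length

/-- A finite weighted multigraph with two distinguished vertices `s` and `t`.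
Edge lengths take values in `ℝ≥0∞`. -/
structure STGraph where
  V : Type
  E : Type
  finV : Fintype V
  finE : Fintype E
  ends : E → V × V
  elen : E → ℝ≥0∞
  s : V
  t : V

attribute [instance] STGraph.finV STGraph.finE

namespace STGraph

/-- The length between two vertices: the infimum of lengths of edges joining them
(`⊤` if there is no such edge). -/
noncomputable def lenFn (G : STGraph) (u v : G.V) : ℝ≥0∞ :=
  ⨅ e : {e : G.E // G.ends e = (u, v) ∨ G.ends e = (v, u)}, G.elen e.1

/-- The shortest-path (extended) distance between two vertices. -/
noncomputable def edist (G : STGraph) (u v : G.V) : ℝ≥0∞ :=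
  ⨅ l : {l : List G.V // l.head? = some u ∧ l.getLast? = some v}, chainCost G.lenFn l.1

/-- `len G` is the distance between the two distinguished vertices. -/
noncomputable def len (G : STGraph) : ℝ≥0∞ := G.edist G.s G.t

/-- An `s`-`t` graph is *proper* if all edge lengths are positive and finite, there are no
self-loops, the graph is connected, and `s ≠ t`. -/
def Proper (G : STGraph) : Prop :=
  (∀ e, 0 < G.elen e ∧ G.elen e < ⊤) ∧
  (∀ e, (G.ends e).1 ≠ (G.ends e).2) ∧
  (∀ u v, G.edist u v ≠ ⊤) ∧ G.s ≠ G.t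

/-- The inner (non-terminal) vertices of an `s`-`t` graph. -/
abbrev Inner (G : STGraph) : Type := {v : G.V // v ≠ G.s ∧ v ≠ G.t}

noncomputable instance (G : STGraph) : Fintype G.Inner := Fintype.ofFinite _

/-- Where a vertex `w` of `G` lands in `H ⊘ G` when the copy of `G` is glued along edge `e` of
`H`: `s(G)` and `t(G)` are identified with the endpoints of `e`. -/
noncomputable def endMap (H G : STGraph) (e : H.E) (w : G.V) : H.V ⊕ (H.E × G.Inner) := by
  classical
  exact if h : w = G.s then Sum.inl (H.ends e).1
    else if h' : w = G.t then Sum.inl (H.ends e).2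
    else Sum.inr (e, ⟨w, h, h'⟩)

/-- The composition `H ⊘ G`: every edge of `H` is replaced by a copy of `G`, with lengths in the
copy along `e` scaled by `len_H(e)/len(G)`. -/
noncomputable def oslash (H G : STGraph) : STGraph where
  V := H.V ⊕ (H.E × G.Inner)
  E := H.E × G.E
  finV := inferInstance
  finE := inferInstance
  ends := fun p => (endMap H G p.1 (G.ends p.2).1, endMap H G p.1 (G.ends p.2).2)
  elen := fun p => H.elen p.1 * G.elen p.2 / G.len
  s := Sum.inl H.s
  t := Sum.inl H.t

/-- A single edge of unit length. -/
noncomputable def unitEdge : STGraph where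
  V := Bool
  E := Unit
  finV := inferInstance
  finE := inferInstance
  ends := fun _ => (false, true)
  elen := fun _ => 1
  s := false
  t := true

/-- Recursive composition: `G^{⊘0}` is a single unit-length edge and
`G^{⊘k} = G^{⊘(k-1)} ⊘ G`. -/
noncomputable def iterOslash (G : STGraph) : ℕ → STGraph
  | 0 => unitEdge
  | k + 1 => oslash (iterOslash G k) G

end STGraph
section Tilde

open STGraph

/-- `D` is the diameter of the connected unweighted graph `G`. -/
def IsDiameter {V : Type} (G : SimpleGraph V) (D : ℕ) : Prop :=
  (∀ u v, G.dist u v ≤ D) ∧ ∃ u v, G.dist u v = D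

/-- The vertex set of `G̃`: four special vertices `s = Sum.inl 0`, `s' = Sum.inl 1`,
`t' = Sum.inl 2`, `t = Sum.inl 3`, together with the layered vertices `v^{(i)}`. -/
abbrev TVert (V : Type) (D : ℕ) : Type := Fin 4 ⊕ (V × Fin (D + 1))

/-- The edge set of `G̃`: the two edges `(s,s'), (t',t)` of length `3D`; the edges
`(s', v^{(1)})` and `(v^{(D+1)}, t')` of length `D`; the diagonal edges
`(u^{(i)}, v^{(i+1)})`; the vertical edges `(u^{(j)}, v^{(j)})` (one per unordered edge of
`G`, oriented increasingly); and the edges `(v^{(i)}, v^{(i+1)})`. -/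
abbrev TEdge {V : Type} [LinearOrder V] (G : SimpleGraph V) (D : ℕ) : Type :=
  Fin 2 ⊕ ((V ⊕ V) ⊕ (({p : V × V // G.Adj p.1 p.2} × Fin D) ⊕
    (({p : V × V // G.Adj p.1 p.2 ∧ p.1 < p.2} × Fin (D + 1)) ⊕ (V × Fin D))))

/-- The metric `s`-`t` graph `G̃` built from a finite connected unweighted graph `G`
with diameter `D` (the graph `𝐺⃗` of layers, plus tails `(s,s')`, `(t',t)` of length `3D`). -/
noncomputable def tildeG {V : Type} [Fintype V] [LinearOrder V] (G : SimpleGraph V)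
    [DecidableRel G.Adj] (D : ℕ) : STGraph where
  V := TVert V D
  E := TEdge G D
  finV := inferInstance
  finE := inferInstance
  ends := fun e => match e with
    | Sum.inl i => if i = 0 then (Sum.inl 0, Sum.inl 1) else (Sum.inl 2, Sum.inl 3)
    | Sum.inr (Sum.inl (Sum.inl v)) => (Sum.inl 1, Sum.inr (v, 0))
    | Sum.inr (Sum.inl (Sum.inr v)) => (Sum.inr (v, Fin.last D), Sum.inl 2)
    | Sum.inr (Sum.inr (Sum.inl (p, i))) =>
        (Sum.inr (p.1.1, i.castSucc), Sum.inr (p.1.2, i.succ))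
    | Sum.inr (Sum.inr (Sum.inr (Sum.inl (q, j)))) => (Sum.inr (q.1.1, j), Sum.inr (q.1.2, j))
    | Sum.inr (Sum.inr (Sum.inr (Sum.inr (v, i)))) =>
        (Sum.inr (v, i.castSucc), Sum.inr (v, i.succ))
  elen := fun e => match e with
    | Sum.inl _ => 3 * (D : ℝ≥0∞)
    | Sum.inr (Sum.inl _) => (D : ℝ≥0∞)
    | Sum.inr (Sum.inr _) => 1
  s := Sum.inl 0
  t := Sum.inl 3

/-- A horizontal edge of `G̃` is any edge which is not vertical. -/
def IsHorizontal {V : Type} [LinearOrder V] {G : SimpleGraph V} {D : ℕ} :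
    TEdge G D → Prop
  | Sum.inr (Sum.inr (Sum.inr (Sum.inl _))) => False
  | _ => True

end Tilde

section Core
namespace STGraph

lemma chainCost_cons_cons {α : Type} (len : α → α → ℝ≥0∞) (a b : α) (l : List α) :
    chainCost len (a :: b :: l) = len a b + chainCost len (b :: l) := by
  rw [chainCost]

lemma chainCost_single {α : Type} (len : α → α → ℝ≥0∞) (a : α) :
    chainCost len [a] = 0 := by
  rw [chainCost]; rintro x y l h; simp at h

lemma chainCost_append_single {α : Type} (len : α → α → ℝ≥0∞) :
    ∀ (l : List α) (a b : α), l.getLast? = some a →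
      chainCost len (l ++ [b]) = chainCost len l + len a b
  | [], a, b, h => by simp at h
  | [x], a, b, h => by
      obtain rfl : x = a := by simpa using h
      simp [chainCost_cons_cons, chainCost_single]
  | x :: y :: l, a, b, h => by
      have h' : (y :: l).getLast? = some a := by rwa [List.getLast?_cons_cons] at h
      have hrec := chainCost_append_single len (y :: l) a b h'
      rw [List.cons_append] at hrec
      show chainCost len (x :: y :: (l ++ [b])) = _
      rw [chainCost_cons_cons, hrec, chainCost_cons_cons]
      ring

variable {G : STGraph}

lemma edist_le_chainCost (u v : G.V) (l : List G.V) (h1 : l.head? = some u)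
    (h2 : l.getLast? = some v) : G.edist u v ≤ chainCost G.lenFn l :=
  iInf_le (fun l : {l : List G.V // l.head? = some u ∧ l.getLast? = some v} =>
    chainCost G.lenFn l.1) ⟨l, h1, h2⟩

lemma edist_self (u : G.V) : G.edist u u = 0 :=
  le_antisymm (by simpa [chainCost_single] using edist_le_chainCost u u [u] rfl (by simp))
    zero_le

lemma edist_le_lenFn (u v : G.V) : G.edist u v ≤ G.lenFn u v := by
  have := edist_le_chainCost u v [u, v] rfl (by simp)
  rwa [chainCost_cons_cons, chainCost_single, add_zero] at this

lemma lenFn_le (u v : G.V) (e : G.E) (h : G.ends e = (u, v) ∨ G.ends e = (v, u)) :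
    G.lenFn u v ≤ G.elen e :=
  iInf_le (fun e : {e : G.E // G.ends e = (u, v) ∨ G.ends e = (v, u)} => G.elen e.1) ⟨e, h⟩

lemma edist_le_elen (u v : G.V) (e : G.E) (h : G.ends e = (u, v) ∨ G.ends e = (v, u)) :
    G.edist u v ≤ G.elen e :=
  (edist_le_lenFn u v).trans (lenFn_le u v e h)

lemma edist_extend (u a b : G.V) : G.edist u b ≤ G.edist u a + G.lenFn a b := by
  have hrw : G.lenFn a b + G.edist u a =
      ⨅ l : {l : List G.V // l.head? = some u ∧ l.getLast? = some a},
        (G.lenFn a b + chainCost G.lenFn l.1) := by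
    rw [edist, ENNReal.add_iInf]
  rw [add_comm, hrw]
  refine le_iInf ?_
  rintro ⟨l, h1, h2⟩
  have hne : l ≠ [] := by rintro rfl; simp at h1
  have e1 : (l ++ [b]).head? = some u := by
    rw [List.head?_append_of_ne_nil _ hne]; exact h1
  have e2 : (l ++ [b]).getLast? = some b := List.getLast?_concat
  calc G.edist u b ≤ chainCost G.lenFn (l ++ [b]) := edist_le_chainCost u b _ e1 e2
    _ = chainCost G.lenFn l + G.lenFn a b := chainCost_append_single _ l a b h2
    _ = G.lenFn a b + chainCost G.lenFn l := add_comm _ _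

/-- Chain version of the potential argument. -/
lemma potential_chain (Φ : G.V → ℝ≥0∞)
    (hΦ : ∀ u v, Φ v ≤ Φ u + G.lenFn u v) :
    ∀ (l : List G.V) (u v : G.V), l.head? = some u → l.getLast? = some v →
      Φ v ≤ Φ u + chainCost G.lenFn l := by
  intro l
  induction l with
  | nil => intro u v h1 h2; simp at h1
  | cons a l ih =>
    intro u v h1 h2
    obtain rfl : a = u := by simpa using h1
    match l with
    | [] =>
      obtain rfl : a = v := by simpa using h2
      simp [chainCost_single]
    | b :: l =>
      have h2' : (b :: l).getLast? = some v := by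
        rwa [List.getLast?_cons_cons] at h2
      calc Φ v ≤ Φ b + chainCost G.lenFn (b :: l) := ih b v rfl h2'
        _ ≤ (Φ a + G.lenFn a b) + chainCost G.lenFn (b :: l) :=
          add_le_add_left (hΦ a b) _
        _ = Φ a + chainCost G.lenFn (a :: b :: l) := by
          rw [chainCost_cons_cons]; ring

/-- The potential argument: a `lenFn`-Lipschitz function grows at most by `edist`. -/
lemma potential_le (Φ : G.V → ℝ≥0∞)
    (hΦ : ∀ e : G.E, Φ (G.ends e).2 ≤ Φ (G.ends e).1 + G.elen e ∧
      Φ (G.ends e).1 ≤ Φ (G.ends e).2 + G.elen e)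
    (u v : G.V) : Φ v ≤ Φ u + G.edist u v := by
  have hlip : ∀ x y, Φ y ≤ Φ x + G.lenFn x y := by
    intro x y
    rw [lenFn, ENNReal.add_iInf]
    refine le_iInf ?_
    rintro ⟨e, he | he⟩
    · have := (hΦ e).1; rw [he] at this; exact this
    · have := (hΦ e).2; rw [he] at this; exact this
  rw [edist, ENNReal.add_iInf]
  refine le_iInf ?_
  rintro ⟨l, h1, h2⟩
  exact potential_chain Φ hlip l u v h1 h2

lemma edist_triangle (u v w : G.V) : G.edist u w ≤ G.edist u v + G.edist v w :=
  potential_le (fun x => G.edist u x)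
    (fun e => ⟨(edist_extend u _ _).trans (add_le_add_right (lenFn_le _ _ e (Or.inl rfl)) _),
      (edist_extend u _ _).trans (add_le_add_right (lenFn_le _ _ e (Or.inr rfl)) _)⟩) v w

/-- Domination lemma: a reflexive triangle-inequality kernel bounded by `c · elen` on edges
is bounded by `c · edist`. -/
lemma ruler (ρ : G.V → G.V → ℝ≥0∞) (c : ℝ≥0∞) (hc0 : c ≠ 0) (hct : c ≠ ⊤)
    (hrefl : ∀ u, ρ u u = 0)
    (htri : ∀ u v w, ρ u w ≤ ρ u v + ρ v w)
    (hedge : ∀ e : G.E, ρ (G.ends e).1 (G.ends e).2 ≤ c * G.elen e ∧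
      ρ (G.ends e).2 (G.ends e).1 ≤ c * G.elen e) :
    ∀ u v, ρ u v ≤ c * G.edist u v := by
  have hlen : ∀ u v, ρ u v ≤ c * G.lenFn u v := by
    intro u v
    rw [lenFn]
    by_cases hne : Nonempty {e : G.E // G.ends e = (u, v) ∨ G.ends e = (v, u)}
    · rw [ENNReal.mul_iInf (fun h => absurd h hct)]
      refine le_iInf ?_
      rintro ⟨e, he | he⟩
      · have := (hedge e).1; rw [he] at this; exact this
      · have := (hedge e).2; rw [he] at this; exact this
    · rw [not_nonempty_iff] at hne
      rw [iInf_of_empty, ENNReal.mul_top hc0]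
      exact le_top
  have hchain : ∀ (l : List G.V) (u v : G.V), l.head? = some u → l.getLast? = some v →
      ρ u v ≤ c * chainCost G.lenFn l := by
    intro l
    induction l with
    | nil => intro u v h1 h2; simp at h1
    | cons a l ih =>
      intro u v h1 h2
      obtain rfl : a = u := by simpa using h1
      match l with
      | [] =>
        obtain rfl : a = v := by simpa using h2
        simp [chainCost_single, hrefl]
      | b :: l =>
        have h2' : (b :: l).getLast? = some v := by
          rwa [List.getLast?_cons_cons] at h2
        calc ρ a v ≤ ρ a b + ρ b v := htri a b v
          _ ≤ c * G.lenFn a b + c * chainCost G.lenFn (b :: l) :=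
            add_le_add (hlen a b) (ih b v rfl h2')
          _ = c * chainCost G.lenFn (a :: b :: l) := by
            rw [chainCost_cons_cons, mul_add]
  intro u v
  haveI : Nonempty {l : List G.V // l.head? = some u ∧ l.getLast? = some v} :=
    ⟨⟨[u, v], rfl, by simp⟩⟩
  rw [edist, ENNReal.mul_iInf (fun h => absurd h hct)]
  refine le_iInf ?_
  rintro ⟨l, h1, h2⟩
  exact hchain l u v h1 h2

lemma edist_comm (u v : G.V) : G.edist u v = G.edist v u := by
  have key : ∀ w x : G.V, G.edist x w ≤ G.edist w x := by
    intro w x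
    have h := ruler (G := G) (fun a b => G.edist b a) 1 one_ne_zero ENNReal.one_ne_top
      (fun u => edist_self u)
      (fun a b c => (edist_triangle c b a).trans (by rw [add_comm]))
      (fun e => ⟨by simpa using edist_le_elen (G.ends e).2 (G.ends e).1 e (Or.inr rfl),
        by simpa using edist_le_elen (G.ends e).1 (G.ends e).2 e (Or.inl rfl)⟩)
      w x
    simpa using h
  exact le_antisymm (key v u) (key u v)

end STGraph
end Core

section Comp
namespace STGraph

variable {H G : STGraph}

lemma endMap_s (e : H.E) : endMap H G e G.s = Sum.inl (H.ends e).1 := by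
  simp [endMap]

lemma endMap_t (e : H.E) (h : G.t ≠ G.s) : endMap H G e G.t = Sum.inl (H.ends e).2 := by
  simp [endMap, h]

lemma endMap_inner (e : H.E) (w : G.V) (h1 : w ≠ G.s) (h2 : w ≠ G.t) :
    endMap H G e w = Sum.inr (e, ⟨w, h1, h2⟩) := by
  simp [endMap, h1, h2]

lemma oslash_ends (p : (H.oslash G).E) :
    (H.oslash G).ends p = (endMap H G p.1 (G.ends p.2).1, endMap H G p.1 (G.ends p.2).2) := rfl

lemma oslash_elen (p : (H.oslash G).E) :
    (H.oslash G).elen p = H.elen p.1 * G.elen p.2 / G.len := rfl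

lemma oslash_elen' (p : (H.oslash G).E) :
    (H.oslash G).elen p = H.elen p.1 / G.len * G.elen p.2 := by
  rw [oslash_elen, div_eq_mul_inv, div_eq_mul_inv, mul_right_comm]

lemma oslash_s : (H.oslash G).s = Sum.inl H.s := rfl
lemma oslash_t : (H.oslash G).t = Sum.inl H.t := rfl

/-- Distances inside a copy of `G` glued along `e` are at most scaled distances in `G`. -/
lemma oslash_copy_edist (h0 : G.len ≠ 0) (ht : G.len ≠ ⊤) (e : H.E)
    (he0 : H.elen e ≠ 0) (het : H.elen e ≠ ⊤) (a b : G.V) :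
    (H.oslash G).edist (endMap H G e a) (endMap H G e b) ≤ (H.elen e / G.len) * G.edist a b := by
  refine ruler (G := G) (fun a b => (H.oslash G).edist (endMap H G e a) (endMap H G e b))
    (H.elen e / G.len) ?_ ?_ (fun u => edist_self _) (fun u v w => edist_triangle _ _ _) ?_ a b
  · simp [ENNReal.div_eq_zero_iff, he0, ht]
  · simp [ENNReal.div_eq_top, het, h0]
  · intro f
    constructor
    · exact (edist_le_elen (G := H.oslash G) _ _ (e, f) (Or.inl rfl)).trans
        (le_of_eq (oslash_elen' (e, f)))
    · exact (edist_le_elen (G := H.oslash G) _ _ (e, f) (Or.inr rfl)).trans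
        (le_of_eq (oslash_elen' (e, f)))

/-- Distances between `H`-vertices do not increase under composition. -/
lemma oslash_inl_edist_le (h0 : G.len ≠ 0) (ht : G.len ≠ ⊤) (hst : G.t ≠ G.s)
    (helen : ∀ e, H.elen e ≠ 0 ∧ H.elen e ≠ ⊤) (u v : H.V) :
    (H.oslash G).edist (Sum.inl u) (Sum.inl v) ≤ H.edist u v := by
  have key := ruler (G := H) (fun u v => (H.oslash G).edist (Sum.inl u) (Sum.inl v)) 1
    one_ne_zero ENNReal.one_ne_top (fun u => edist_self _)
    (fun u v w => edist_triangle _ _ _) ?_ u v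
  · simpa using key
  intro e
  have h1 : (H.oslash G).edist (Sum.inl (H.ends e).1) (Sum.inl (H.ends e).2) ≤ H.elen e := by
    calc (H.oslash G).edist (Sum.inl (H.ends e).1) (Sum.inl (H.ends e).2)
        = (H.oslash G).edist (endMap H G e G.s) (endMap H G e G.t) := by
          rw [endMap_s, endMap_t _ hst]
      _ ≤ (H.elen e / G.len) * G.edist G.s G.t :=
          oslash_copy_edist h0 ht e (helen e).1 (helen e).2 _ _
      _ = H.elen e := by rw [← len, ENNReal.div_mul_cancel h0 ht]
  constructor
  · simpa using h1
  · show (H.oslash G).edist (Sum.inl (H.ends e).2) (Sum.inl (H.ends e).1) ≤ 1 * H.elen e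
    rw [one_mul, edist_comm (G := H.oslash G) (Sum.inl (H.ends e).2) (Sum.inl (H.ends e).1)]
    exact h1

/-- The potential used for the lower bound on distances in `H ⊘ G`. -/
noncomputable def lowerPot (H G : STGraph) (u' : H.V) : (H.oslash G).V → ℝ≥0∞ :=
  Sum.elim (fun w => H.edist u' w)
    (fun q => min (H.edist u' (H.ends q.1).1 + (H.elen q.1 / G.len) * G.edist G.s q.2.1)
      (H.edist u' (H.ends q.1).2 + (H.elen q.1 / G.len) * G.edist q.2.1 G.t))

lemma lowerPot_inl (u' : H.V) (w : H.V) :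
    lowerPot H G u' (Sum.inl w) = H.edist u' w := rfl

lemma lowerPot_inr (u' : H.V) (q : H.E × G.Inner) :
    lowerPot H G u' (Sum.inr q) =
      min (H.edist u' (H.ends q.1).1 + (H.elen q.1 / G.len) * G.edist G.s q.2.1)
        (H.edist u' (H.ends q.1).2 + (H.elen q.1 / G.len) * G.edist q.2.1 G.t) := rfl

/-- Distances between `H`-vertices do not decrease under composition. -/
lemma oslash_inl_edist_ge (h0 : G.len ≠ 0) (ht : G.len ≠ ⊤) (u' v' : H.V) :
    H.edist u' v' ≤ (H.oslash G).edist (Sum.inl u') (Sum.inl v') := by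
  classical
  have main := potential_le (G := H.oslash G) (lowerPot H G u') ?_ (Sum.inl u') (Sum.inl v')
  · rw [lowerPot_inl, lowerPot_inl, edist_self, zero_add] at main
    exact main
  rintro ⟨e, f⟩
  have hcm : H.elen e / G.len * G.len = H.elen e := ENNReal.div_mul_cancel h0 ht
  set c := H.elen e / G.len with hc
  set U := H.edist u' (H.ends e).1 with hU
  set W := H.edist u' (H.ends e).2 with hW
  have hUW : U ≤ W + c * G.len := by
    rw [hcm]
    exact (H.edist_triangle u' (H.ends e).2 (H.ends e).1).trans
      (add_le_add_right (edist_le_elen _ _ e (Or.inr rfl)) _)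
  have hWU : W ≤ U + c * G.len := by
    rw [hcm]
    exact (H.edist_triangle u' (H.ends e).1 (H.ends e).2).trans
      (add_le_add_right (edist_le_elen _ _ e (Or.inl rfl)) _)
  have hL : (H.oslash G).elen (e, f) = c * G.elen f := oslash_elen' (e, f)
  have step : ∀ x y : G.V, G.edist x y ≤ G.elen f →
      lowerPot H G u' (endMap H G e y) ≤ lowerPot H G u' (endMap H G e x) + c * G.elen f := by
    intro x y hxy
    have hyx : G.edist y x ≤ G.elen f := by rwa [edist_comm] at hxy
    by_cases hxs : x = G.s
    · subst hxs
      rw [endMap_s, lowerPot_inl, ← hU]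
      by_cases hys : y = G.s
      · subst hys; rw [endMap_s, lowerPot_inl, ← hU]; exact le_self_add
      by_cases hyt : y = G.t
      · subst hyt; rw [endMap_t _ hys, lowerPot_inl, ← hW]
        exact hWU.trans (add_le_add_right (mul_le_mul_right hxy c) U)
      · rw [endMap_inner e y hys hyt, lowerPot_inr]
        exact (min_le_left _ _).trans (add_le_add_right (mul_le_mul_right hxy c) U)
    by_cases hxt : x = G.t
    · subst hxt
      rw [endMap_t _ hxs, lowerPot_inl, ← hW]
      by_cases hys : y = G.s
      · subst hys; rw [endMap_s, lowerPot_inl, ← hU]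
        refine hUW.trans (add_le_add_right (mul_le_mul_right ?_ c) W)
        exact hyx
      by_cases hyt : y = G.t
      · subst hyt; rw [endMap_t _ hxs, lowerPot_inl, ← hW]; exact le_self_add
      · rw [endMap_inner e y hys hyt, lowerPot_inr]
        refine (min_le_right _ _).trans (add_le_add_right (mul_le_mul_right hyx c) W)
    · rw [endMap_inner e x hxs hxt, lowerPot_inr]
      simp only [← hU, ← hW, ← hc]
      by_cases hys : y = G.s
      · subst hys
        rw [endMap_s, lowerPot_inl, ← hU, ← min_add_add_right]
        refine le_min (le_add_right le_self_add) ?_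
        calc U ≤ W + c * G.len := hUW
          _ ≤ W + c * (G.edist G.s x + G.edist x G.t) := by
              refine add_le_add_right (mul_le_mul_right ?_ c) W
              exact (G.edist_triangle G.s x G.t)
          _ ≤ W + c * (G.elen f + G.edist x G.t) := by
              refine add_le_add_right (mul_le_mul_right (add_le_add_left hyx _) c) W
          _ = W + c * G.edist x G.t + c * G.elen f := by ring
      by_cases hyt : y = G.t
      · subst hyt
        rw [endMap_t _ hys, lowerPot_inl, ← hW, ← min_add_add_right]
        refine le_min ?_ (le_add_right le_self_add)
        calc W ≤ U + c * G.len := hWU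
          _ ≤ U + c * (G.edist G.s x + G.edist x G.t) := by
              refine add_le_add_right (mul_le_mul_right (G.edist_triangle G.s x G.t) c) U
          _ ≤ U + c * (G.edist G.s x + G.elen f) := by
              refine add_le_add_right (mul_le_mul_right (add_le_add_right hxy _) c) U
          _ = U + c * G.edist G.s x + c * G.elen f := by ring
      · rw [endMap_inner e y hys hyt, lowerPot_inr]
        simp only [← hU, ← hW, ← hc]
        rw [← min_add_add_right]
        refine le_min ((min_le_left _ _).trans ?_) ((min_le_right _ _).trans ?_)
        · calc U + c * G.edist G.s y ≤ U + c * (G.edist G.s x + G.elen f) := by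
                refine add_le_add_right (mul_le_mul_right ?_ c) U
                exact (G.edist_triangle G.s x y).trans (add_le_add_right hxy _)
            _ = U + c * G.edist G.s x + c * G.elen f := by ring
        · calc W + c * G.edist y G.t ≤ W + c * (G.elen f + G.edist x G.t) := by
                refine add_le_add_right (mul_le_mul_right ?_ c) W
                exact (G.edist_triangle y x G.t).trans (add_le_add_left hyx _)
            _ = W + c * G.edist x G.t + c * G.elen f := by ring
  rw [hL]
  constructor
  · exact step (G.ends f).1 (G.ends f).2 (edist_le_elen _ _ f (Or.inl rfl))
  · exact step (G.ends f).2 (G.ends f).1 (edist_le_elen _ _ f (Or.inr rfl))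

lemma oslash_len_ge (h0 : G.len ≠ 0) (ht : G.len ≠ ⊤) : H.len ≤ (H.oslash G).len :=
  oslash_inl_edist_ge h0 ht H.s H.t

end STGraph
end Comp

section TildeFacts
open STGraph

variable {V : Type} [Fintype V] [LinearOrder V] (G : SimpleGraph V) [DecidableRel G.Adj]
  (D : ℕ)

lemma tilde_ends_0 : (tildeG G D).ends (Sum.inl 0) = (Sum.inl 0, Sum.inl 1) := by
  simp [tildeG]

lemma tilde_ends_1 : (tildeG G D).ends (Sum.inl 1) = (Sum.inl 2, Sum.inl 3) := by
  simp [tildeG]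

lemma tilde_elen_tail (i : Fin 2) : (tildeG G D).elen (Sum.inl i) = 3 * (D : ℝ≥0∞) := rfl

lemma tilde_dss' : (tildeG G D).edist (Sum.inl 0) (Sum.inl 1) ≤ 3 * (D : ℝ≥0∞) := by
  exact (edist_le_elen (G := tildeG G D) _ _ (Sum.inl 0)
    (Or.inl (tilde_ends_0 G D))).trans_eq rfl

lemma tilde_dtt' : (tildeG G D).edist (Sum.inl 2) (Sum.inl 3) ≤ 3 * (D : ℝ≥0∞) :=
  by exact (edist_le_elen (G := tildeG G D) _ _ (Sum.inl 1)
    (Or.inl (tilde_ends_1 G D))).trans_eq rfl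

lemma tilde_ds'v (v : V) :
    (tildeG G D).edist (Sum.inl 1) (Sum.inr (v, 0)) ≤ (D : ℝ≥0∞) :=
  by exact (edist_le_elen (G := tildeG G D) _ _ (Sum.inr (Sum.inl (Sum.inl v)))
    (Or.inl (by simp [tildeG]))).trans_eq rfl

lemma tilde_dvt' (v : V) :
    (tildeG G D).edist (Sum.inr (v, Fin.last D)) (Sum.inl 2) ≤ (D : ℝ≥0∞) :=
  by exact (edist_le_elen (G := tildeG G D) _ _ (Sum.inr (Sum.inl (Sum.inr v)))
    (Or.inl (by simp [tildeG]))).trans_eq rfl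

lemma tilde_col (v : V) (j : Fin D) :
    (tildeG G D).edist (Sum.inr (v, j.castSucc)) (Sum.inr (v, j.succ)) ≤ 1 :=
  by exact (edist_le_elen (G := tildeG G D) _ _ (Sum.inr (Sum.inr (Sum.inr (Sum.inr (v, j)))))
    (Or.inl (by simp [tildeG]))).trans_eq rfl

lemma tilde_dS (v : V) (j : Fin (D + 1)) :
    (tildeG G D).edist (Sum.inl 0) (Sum.inr (v, j)) ≤ 4 * (D : ℝ≥0∞) + (j.val : ℝ≥0∞) := by
  induction j using Fin.induction with
  | zero =>
    simp only [Fin.val_zero, Nat.cast_zero, add_zero]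
    calc (tildeG G D).edist (Sum.inl 0) (Sum.inr (v, 0))
        ≤ (tildeG G D).edist (Sum.inl 0) (Sum.inl 1) +
          (tildeG G D).edist (Sum.inl 1) (Sum.inr (v, 0)) := edist_triangle _ _ _
      _ ≤ 3 * (D : ℝ≥0∞) + (D : ℝ≥0∞) := add_le_add (tilde_dss' G D) (tilde_ds'v G D v)
      _ = 4 * (D : ℝ≥0∞) := by ring
  | succ j ih =>
    calc (tildeG G D).edist (Sum.inl 0) (Sum.inr (v, j.succ))
        ≤ (tildeG G D).edist (Sum.inl 0) (Sum.inr (v, j.castSucc)) +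
          (tildeG G D).edist (Sum.inr (v, j.castSucc)) (Sum.inr (v, j.succ)) :=
          edist_triangle _ _ _
      _ ≤ (4 * (D : ℝ≥0∞) + (j.castSucc.val : ℝ≥0∞)) + 1 := add_le_add ih (tilde_col G D v j)
      _ = 4 * (D : ℝ≥0∞) + (j.succ.val : ℝ≥0∞) := by
          simp [Fin.val_succ, Fin.coe_castSucc]; push_cast; ring

lemma tilde_dT (v : V) (j : Fin (D + 1)) :
    (tildeG G D).edist (Sum.inr (v, j)) (Sum.inl 3) ≤
      4 * (D : ℝ≥0∞) + ((D - j.val : ℕ) : ℝ≥0∞) := by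
  induction j using Fin.reverseInduction with
  | last =>
    simp only [Fin.val_last, Nat.sub_self, Nat.cast_zero, add_zero]
    calc (tildeG G D).edist (Sum.inr (v, Fin.last D)) (Sum.inl 3)
        ≤ (tildeG G D).edist (Sum.inr (v, Fin.last D)) (Sum.inl 2) +
          (tildeG G D).edist (Sum.inl 2) (Sum.inl 3) := edist_triangle _ _ _
      _ ≤ (D : ℝ≥0∞) + 3 * (D : ℝ≥0∞) := add_le_add (tilde_dvt' G D v) (tilde_dtt' G D)
      _ = 4 * (D : ℝ≥0∞) := by ring
  | cast j ih =>
    have harith : ((D - j.castSucc.val : ℕ) : ℝ≥0∞) = ((D - j.succ.val : ℕ) : ℝ≥0∞) + 1 := by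
      have : (D - j.castSucc.val : ℕ) = (D - j.succ.val : ℕ) + 1 := by
        have := j.isLt; simp [Fin.val_succ, Fin.coe_castSucc]; omega
      rw [this]; push_cast; ring
    calc (tildeG G D).edist (Sum.inr (v, j.castSucc)) (Sum.inl 3)
        ≤ (tildeG G D).edist (Sum.inr (v, j.castSucc)) (Sum.inr (v, j.succ)) +
          (tildeG G D).edist (Sum.inr (v, j.succ)) (Sum.inl 3) := edist_triangle _ _ _
      _ ≤ 1 + (4 * (D : ℝ≥0∞) + ((D - j.succ.val : ℕ) : ℝ≥0∞)) :=
          add_le_add (tilde_col G D v j) ih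
      _ = 4 * (D : ℝ≥0∞) + ((D - j.castSucc.val : ℕ) : ℝ≥0∞) := by rw [harith]; ring

lemma tilde_len_le [Nonempty V] :
    (tildeG G D).edist (Sum.inl 0) (Sum.inl 3) ≤ 9 * (D : ℝ≥0∞) := by
  obtain ⟨v⟩ := ‹Nonempty V›
  calc (tildeG G D).edist (Sum.inl 0) (Sum.inl 3)
      ≤ (tildeG G D).edist (Sum.inl 0) (Sum.inr (v, Fin.last D)) +
        (tildeG G D).edist (Sum.inr (v, Fin.last D)) (Sum.inl 3) := edist_triangle _ _ _
    _ ≤ (4 * (D : ℝ≥0∞) + ((Fin.last D).val : ℝ≥0∞)) +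
        (4 * (D : ℝ≥0∞) + ((D - (Fin.last D).val : ℕ) : ℝ≥0∞)) :=
        add_le_add (tilde_dS G D v _) (tilde_dT G D v _)
    _ = 9 * (D : ℝ≥0∞) := by simp [Fin.val_last]; ring

lemma tilde_ds't [Nonempty V] :
    (tildeG G D).edist (Sum.inl 1) (Sum.inl 3) ≤ 6 * (D : ℝ≥0∞) := by
  obtain ⟨v⟩ := ‹Nonempty V›
  calc (tildeG G D).edist (Sum.inl 1) (Sum.inl 3)
      ≤ (tildeG G D).edist (Sum.inl 1) (Sum.inr (v, 0)) +
        (tildeG G D).edist (Sum.inr (v, 0)) (Sum.inl 3) := edist_triangle _ _ _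
    _ ≤ (D : ℝ≥0∞) + (4 * (D : ℝ≥0∞) + ((D - (0 : Fin (D+1)).val : ℕ) : ℝ≥0∞)) :=
        add_le_add (tilde_ds'v G D v) (tilde_dT G D v _)
    _ = 6 * (D : ℝ≥0∞) := by simp; ring

lemma tilde_dst' [Nonempty V] :
    (tildeG G D).edist (Sum.inl 0) (Sum.inl 2) ≤ 6 * (D : ℝ≥0∞) := by
  obtain ⟨v⟩ := ‹Nonempty V›
  calc (tildeG G D).edist (Sum.inl 0) (Sum.inl 2)
      ≤ (tildeG G D).edist (Sum.inl 0) (Sum.inr (v, Fin.last D)) +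
        (tildeG G D).edist (Sum.inr (v, Fin.last D)) (Sum.inl 2) := edist_triangle _ _ _
    _ ≤ (4 * (D : ℝ≥0∞) + ((Fin.last D).val : ℝ≥0∞)) + (D : ℝ≥0∞) :=
        add_le_add (tilde_dS G D v _) (tilde_dvt' G D v)
    _ = 6 * (D : ℝ≥0∞) := by simp [Fin.val_last]; ring

/-- `tri(G̃) ≤ 9D`. -/
lemma tilde_tri [Nonempty V] (w : (tildeG G D).V) :
    (tildeG G D).edist (tildeG G D).s w + (tildeG G D).edist w (tildeG G D).t
      ≤ 9 * (D : ℝ≥0∞) := by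
  show (tildeG G D).edist (Sum.inl 0) w + (tildeG G D).edist w (Sum.inl 3) ≤ _
  obtain (i | ⟨v, j⟩) := w
  · fin_cases i
    · show (tildeG G D).edist (Sum.inl 0) (Sum.inl 0) + (tildeG G D).edist (Sum.inl 0) (Sum.inl 3) ≤ _
      rw [STGraph.edist_self (G := tildeG G D) (Sum.inl 0), zero_add]; exact tilde_len_le G D
    · show (tildeG G D).edist (Sum.inl 0) (Sum.inl 1) + (tildeG G D).edist (Sum.inl 1) (Sum.inl 3) ≤ _
      calc _ ≤ 3 * (D : ℝ≥0∞) + 6 * (D : ℝ≥0∞) :=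
          add_le_add (tilde_dss' G D) (tilde_ds't G D)
        _ = 9 * (D : ℝ≥0∞) := by ring
    · show (tildeG G D).edist (Sum.inl 0) (Sum.inl 2) + (tildeG G D).edist (Sum.inl 2) (Sum.inl 3) ≤ _
      calc _ ≤ 6 * (D : ℝ≥0∞) + 3 * (D : ℝ≥0∞) :=
          add_le_add (tilde_dst' G D) (tilde_dtt' G D)
        _ = 9 * (D : ℝ≥0∞) := by ring
    · show (tildeG G D).edist (Sum.inl 0) (Sum.inl 3) + (tildeG G D).edist (Sum.inl 3) (Sum.inl 3) ≤ _
      rw [STGraph.edist_self (G := tildeG G D) (Sum.inl 3), add_zero]; exact tilde_len_le G D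
  · have hjc : ((j.val : ℝ≥0∞) + ((D - j.val : ℕ) : ℝ≥0∞)) = (D : ℝ≥0∞) := by
      rw [← Nat.cast_add]
      congr 1
      have := j.isLt; omega
    calc _ ≤ (4 * (D : ℝ≥0∞) + (j.val : ℝ≥0∞)) +
          (4 * (D : ℝ≥0∞) + ((D - j.val : ℕ) : ℝ≥0∞)) :=
          add_le_add (tilde_dS G D v j) (tilde_dT G D v j)
      _ = 8 * (D : ℝ≥0∞) + ((j.val : ℝ≥0∞) + ((D - j.val : ℕ) : ℝ≥0∞)) := by ring
      _ = 9 * (D : ℝ≥0∞) := by rw [hjc]; ring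

/-- `len(G̃) ≥ 9D` via a potential function. -/
lemma tilde_len_ge :
    9 * (D : ℝ≥0∞) ≤ (tildeG G D).edist (Sum.inl 0) (Sum.inl 3) := by
  set Φ : (tildeG G D).V → ℝ≥0∞ :=
    Sum.elim (fun i => 3 * (D : ℝ≥0∞) * (i.val : ℝ≥0∞)) (fun q => 4 * (D : ℝ≥0∞) + (q.2.val : ℝ≥0∞))
    with hΦ
  have main := potential_le (G := tildeG G D) Φ ?_ (Sum.inl 0) (Sum.inl 3)
  · have h3 : (((3 : Fin 4).val : ℕ) : ℝ≥0∞) = 3 := by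
      rw [show ((3 : Fin 4).val : ℕ) = 3 from rfl]; norm_num
    have h0 : (((0 : Fin 4).val : ℕ) : ℝ≥0∞) = 0 := by
      rw [show ((0 : Fin 4).val : ℕ) = 0 from rfl]; norm_num
    simp only [hΦ, Sum.elim_inl, h3, h0, mul_zero, zero_add] at main
    calc 9 * (D : ℝ≥0∞) = 3 * (D : ℝ≥0∞) * 3 := by ring
      _ ≤ _ := main
  rintro (i | ((v | v) | (⟨p, i⟩ | (⟨q, j⟩ | ⟨v, i⟩))))
  · by_cases hi : i = 0
    · subst hi
      rw [tilde_ends_0]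
      constructor
      · show 3 * (D : ℝ≥0∞) * (((1 : Fin 4).val : ℕ) : ℝ≥0∞) ≤
          3 * (D : ℝ≥0∞) * (((0 : Fin 4).val : ℕ) : ℝ≥0∞) + 3 * (D : ℝ≥0∞)
        rw [show ((1 : Fin 4).val : ℕ) = 1 from rfl, show ((0 : Fin 4).val : ℕ) = 0 from rfl]
        push_cast
        exact le_of_eq (by ring)
      · show 3 * (D : ℝ≥0∞) * (((0 : Fin 4).val : ℕ) : ℝ≥0∞) ≤
          3 * (D : ℝ≥0∞) * (((1 : Fin 4).val : ℕ) : ℝ≥0∞) + 3 * (D : ℝ≥0∞)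
        rw [show ((1 : Fin 4).val : ℕ) = 1 from rfl, show ((0 : Fin 4).val : ℕ) = 0 from rfl]
        push_cast
        rw [mul_zero]
        exact zero_le
    · have he : (tildeG G D).ends (Sum.inl i) = (Sum.inl 2, Sum.inl 3) := by
        simp [tildeG, hi]
      rw [he]
      constructor
      · show 3 * (D : ℝ≥0∞) * (((3 : Fin 4).val : ℕ) : ℝ≥0∞) ≤
          3 * (D : ℝ≥0∞) * (((2 : Fin 4).val : ℕ) : ℝ≥0∞) + 3 * (D : ℝ≥0∞)
        rw [show ((3 : Fin 4).val : ℕ) = 3 from rfl, show ((2 : Fin 4).val : ℕ) = 2 from rfl]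
        push_cast
        exact le_of_eq (by ring)
      · show 3 * (D : ℝ≥0∞) * (((2 : Fin 4).val : ℕ) : ℝ≥0∞) ≤
          3 * (D : ℝ≥0∞) * (((3 : Fin 4).val : ℕ) : ℝ≥0∞) + 3 * (D : ℝ≥0∞)
        rw [show ((3 : Fin 4).val : ℕ) = 3 from rfl, show ((2 : Fin 4).val : ℕ) = 2 from rfl]
        push_cast
        calc 3 * (D : ℝ≥0∞) * 2 = 6 * (D : ℝ≥0∞) := by ring
          _ ≤ 12 * (D : ℝ≥0∞) := mul_le_mul_left (by norm_num) _
          _ = 3 * (D : ℝ≥0∞) * 3 + 3 * (D : ℝ≥0∞) := by ring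
  · constructor
    · show 4 * (D : ℝ≥0∞) + (((0 : Fin (D+1)).val : ℕ) : ℝ≥0∞) ≤
        3 * (D : ℝ≥0∞) * (((1 : Fin 4).val : ℕ) : ℝ≥0∞) + (D : ℝ≥0∞)
      rw [Fin.val_zero, show ((1 : Fin 4).val : ℕ) = 1 from rfl]
      push_cast
      exact le_of_eq (by ring)
    · show 3 * (D : ℝ≥0∞) * (((1 : Fin 4).val : ℕ) : ℝ≥0∞) ≤
        4 * (D : ℝ≥0∞) + (((0 : Fin (D+1)).val : ℕ) : ℝ≥0∞) + (D : ℝ≥0∞)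
      rw [Fin.val_zero, show ((1 : Fin 4).val : ℕ) = 1 from rfl]
      push_cast
      calc 3 * (D : ℝ≥0∞) * 1 = 3 * (D : ℝ≥0∞) := by ring
        _ ≤ 5 * (D : ℝ≥0∞) := mul_le_mul_left (by norm_num) _
        _ = 4 * (D : ℝ≥0∞) + 0 + (D : ℝ≥0∞) := by ring
  · constructor
    · show 3 * (D : ℝ≥0∞) * (((2 : Fin 4).val : ℕ) : ℝ≥0∞) ≤
        4 * (D : ℝ≥0∞) + (((Fin.last D).val : ℕ) : ℝ≥0∞) + (D : ℝ≥0∞)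
      rw [Fin.val_last, show ((2 : Fin 4).val : ℕ) = 2 from rfl]
      push_cast
      exact le_of_eq (by ring)
    · show 4 * (D : ℝ≥0∞) + (((Fin.last D).val : ℕ) : ℝ≥0∞) ≤
        3 * (D : ℝ≥0∞) * (((2 : Fin 4).val : ℕ) : ℝ≥0∞) + (D : ℝ≥0∞)
      rw [Fin.val_last, show ((2 : Fin 4).val : ℕ) = 2 from rfl]
      push_cast
      calc 4 * (D : ℝ≥0∞) + (D : ℝ≥0∞) = 5 * (D : ℝ≥0∞) := by ring
        _ ≤ 7 * (D : ℝ≥0∞) := mul_le_mul_left (by norm_num) _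
        _ = 3 * (D : ℝ≥0∞) * 2 + (D : ℝ≥0∞) := by ring
  · constructor
    · show 4 * (D : ℝ≥0∞) + ((i.succ.val : ℕ) : ℝ≥0∞) ≤
        4 * (D : ℝ≥0∞) + ((i.castSucc.val : ℕ) : ℝ≥0∞) + 1
      rw [Fin.val_succ, Fin.coe_castSucc]
      push_cast
      exact le_of_eq (by ring)
    · show 4 * (D : ℝ≥0∞) + ((i.castSucc.val : ℕ) : ℝ≥0∞) ≤
        4 * (D : ℝ≥0∞) + ((i.succ.val : ℕ) : ℝ≥0∞) + 1
      rw [Fin.val_succ, Fin.coe_castSucc]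
      push_cast
      exact le_add_right (add_le_add_right le_self_add _)
  · constructor
    · show 4 * (D : ℝ≥0∞) + ((j.val : ℕ) : ℝ≥0∞) ≤
        4 * (D : ℝ≥0∞) + ((j.val : ℕ) : ℝ≥0∞) + 1
      exact le_self_add
    · show 4 * (D : ℝ≥0∞) + ((j.val : ℕ) : ℝ≥0∞) ≤
        4 * (D : ℝ≥0∞) + ((j.val : ℕ) : ℝ≥0∞) + 1
      exact le_self_add
  · constructor
    · show 4 * (D : ℝ≥0∞) + ((i.succ.val : ℕ) : ℝ≥0∞) ≤
        4 * (D : ℝ≥0∞) + ((i.castSucc.val : ℕ) : ℝ≥0∞) + 1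
      rw [Fin.val_succ, Fin.coe_castSucc]
      push_cast
      exact le_of_eq (by ring)
    · show 4 * (D : ℝ≥0∞) + ((i.castSucc.val : ℕ) : ℝ≥0∞) ≤
        4 * (D : ℝ≥0∞) + ((i.succ.val : ℕ) : ℝ≥0∞) + 1
      rw [Fin.val_succ, Fin.coe_castSucc]
      push_cast
      exact le_add_right (add_le_add_right le_self_add _)

lemma tilde_len [Nonempty V] : (tildeG G D).len = 9 * (D : ℝ≥0∞) :=
  le_antisymm (tilde_len_le G D) (tilde_len_ge G D)

/-- The uniform edge bound `Q(f) ≤ 9D(1+β)` for all edges of `G̃`. -/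
lemma tilde_edgeQ [Nonempty V] (hD : 1 ≤ D) (β : ℝ≥0∞) (hβ : 1 + β ≤ 9 * (D : ℝ≥0∞) * β)
    (f : (tildeG G D).E) :
    (tildeG G D).edist (tildeG G D).s ((tildeG G D).ends f).1 +
      (tildeG G D).edist ((tildeG G D).ends f).2 (tildeG G D).t +
      (tildeG G D).elen f * (1 + β) ≤ 9 * (D : ℝ≥0∞) * (1 + β) := by
  have hd1 : (1 : ℝ≥0∞) ≤ (D : ℝ≥0∞) := by exact_mod_cast hD
  have h91 : (1 : ℝ≥0∞) ≤ 9 * (D : ℝ≥0∞) := by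
    calc (1:ℝ≥0∞) ≤ 9 * 1 := by norm_num
      _ ≤ 9 * (D : ℝ≥0∞) := mul_le_mul_right hd1 _
  have hβ9 : β ≤ 9 * (D : ℝ≥0∞) * β := by
    calc β = 1 * β := (one_mul β).symm
      _ ≤ 9 * (D : ℝ≥0∞) * β := mul_le_mul_left h91 β
  have hfin : 9 * (D : ℝ≥0∞) + 9 * (D : ℝ≥0∞) * β = 9 * (D : ℝ≥0∞) * (1 + β) := by ring
  obtain (i | ((v | v) | (⟨p, i⟩ | (⟨q, j⟩ | ⟨v, i⟩)))) := f
  · by_cases hi : i = 0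
    · subst hi
      rw [tilde_ends_0]
      show (tildeG G D).edist (Sum.inl 0) (Sum.inl 0) +
        (tildeG G D).edist (Sum.inl 1) (Sum.inl 3) + 3 * (D:ℝ≥0∞) * (1 + β) ≤ _
      rw [STGraph.edist_self (G := tildeG G D) (Sum.inl 0), zero_add]
      calc (tildeG G D).edist (Sum.inl 1) (Sum.inl 3) + 3 * (D:ℝ≥0∞) * (1 + β)
          ≤ 6 * (D:ℝ≥0∞) + 3 * (D:ℝ≥0∞) * (1 + β) := add_le_add_left (tilde_ds't G D) _
        _ = 9 * (D:ℝ≥0∞) + 3 * (D:ℝ≥0∞) * β := by ring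
        _ ≤ 9 * (D:ℝ≥0∞) + 9 * (D:ℝ≥0∞) * β := by
            refine add_le_add_right (mul_le_mul_left ?_ β) _
            exact mul_le_mul_left (by norm_num) _
        _ = 9 * (D:ℝ≥0∞) * (1 + β) := hfin
    · have he : (tildeG G D).ends (Sum.inl i) = (Sum.inl 2, Sum.inl 3) := by
        simp [tildeG, hi]
      rw [he]
      show (tildeG G D).edist (Sum.inl 0) (Sum.inl 2) +
        (tildeG G D).edist (Sum.inl 3) (Sum.inl 3) + 3 * (D:ℝ≥0∞) * (1 + β) ≤ _
      rw [STGraph.edist_self (G := tildeG G D) (Sum.inl 3), add_zero]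
      calc (tildeG G D).edist (Sum.inl 0) (Sum.inl 2) + 3 * (D:ℝ≥0∞) * (1 + β)
          ≤ 6 * (D:ℝ≥0∞) + 3 * (D:ℝ≥0∞) * (1 + β) := add_le_add_left (tilde_dst' G D) _
        _ = 9 * (D:ℝ≥0∞) + 3 * (D:ℝ≥0∞) * β := by ring
        _ ≤ 9 * (D:ℝ≥0∞) + 9 * (D:ℝ≥0∞) * β := by
            refine add_le_add_right (mul_le_mul_left ?_ β) _
            exact mul_le_mul_left (by norm_num) _
        _ = 9 * (D:ℝ≥0∞) * (1 + β) := hfin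
  · -- edge (s', v^{(1)})
    show (tildeG G D).edist (Sum.inl 0) (Sum.inl 1) +
      (tildeG G D).edist (Sum.inr (v, 0)) (Sum.inl 3) + (D:ℝ≥0∞) * (1 + β) ≤ _
    have h2 : (tildeG G D).edist (Sum.inr (v, 0)) (Sum.inl 3) ≤ 5 * (D:ℝ≥0∞) := by
      refine (tilde_dT G D v 0).trans (le_of_eq ?_)
      rw [Fin.val_zero, Nat.sub_zero]
      ring
    calc _ ≤ 3 * (D:ℝ≥0∞) + 5 * (D:ℝ≥0∞) + (D:ℝ≥0∞) * (1 + β) :=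
          add_le_add (add_le_add (tilde_dss' G D) h2) le_rfl
      _ = 9 * (D:ℝ≥0∞) + (D:ℝ≥0∞) * β := by ring
      _ ≤ 9 * (D:ℝ≥0∞) + 9 * (D:ℝ≥0∞) * β := by
          refine add_le_add_right (mul_le_mul_left ?_ β) _
          calc (D:ℝ≥0∞) = 1 * (D:ℝ≥0∞) := (one_mul _).symm
            _ ≤ 9 * (D:ℝ≥0∞) := mul_le_mul_left (by norm_num) _
      _ = 9 * (D:ℝ≥0∞) * (1 + β) := hfin
  · -- edge (v^{(D+1)}, t')
    show (tildeG G D).edist (Sum.inl 0) (Sum.inr (v, Fin.last D)) +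
      (tildeG G D).edist (Sum.inl 2) (Sum.inl 3) + (D:ℝ≥0∞) * (1 + β) ≤ _
    have h1 : (tildeG G D).edist (Sum.inl 0) (Sum.inr (v, Fin.last D)) ≤ 5 * (D:ℝ≥0∞) := by
      refine (tilde_dS G D v _).trans (le_of_eq ?_)
      rw [Fin.val_last]
      ring
    calc _ ≤ 5 * (D:ℝ≥0∞) + 3 * (D:ℝ≥0∞) + (D:ℝ≥0∞) * (1 + β) :=
          add_le_add (add_le_add h1 (tilde_dtt' G D)) le_rfl
      _ = 9 * (D:ℝ≥0∞) + (D:ℝ≥0∞) * β := by ring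
      _ ≤ 9 * (D:ℝ≥0∞) + 9 * (D:ℝ≥0∞) * β := by
          refine add_le_add_right (mul_le_mul_left ?_ β) _
          calc (D:ℝ≥0∞) = 1 * (D:ℝ≥0∞) := (one_mul _).symm
            _ ≤ 9 * (D:ℝ≥0∞) := mul_le_mul_left (by norm_num) _
      _ = 9 * (D:ℝ≥0∞) * (1 + β) := hfin
  · -- diagonal edge
    show (tildeG G D).edist (Sum.inl 0) (Sum.inr (p.1.1, i.castSucc)) +
      (tildeG G D).edist (Sum.inr (p.1.2, i.succ)) (Sum.inl 3) + 1 * (1 + β) ≤ _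
    have hn : ((i.castSucc.val : ℕ) : ℝ≥0∞) + ((D - i.succ.val : ℕ) : ℝ≥0∞) + 1 = (D:ℝ≥0∞) := by
      rw [show ((1:ℝ≥0∞) = ((1:ℕ):ℝ≥0∞)) from by norm_num, ← Nat.cast_add, ← Nat.cast_add]
      congr 1
      have := i.isLt
      simp only [Fin.coe_castSucc, Fin.val_succ]
      omega
    calc _ ≤ (4 * (D:ℝ≥0∞) + ((i.castSucc.val : ℕ) : ℝ≥0∞)) +
          (4 * (D:ℝ≥0∞) + ((D - i.succ.val : ℕ) : ℝ≥0∞)) + 1 * (1 + β) :=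
          add_le_add (add_le_add (tilde_dS G D _ _) (tilde_dT G D _ _)) le_rfl
      _ = 8 * (D:ℝ≥0∞) + (((i.castSucc.val : ℕ) : ℝ≥0∞) + ((D - i.succ.val : ℕ) : ℝ≥0∞) + 1)
          + β := by ring
      _ = 9 * (D:ℝ≥0∞) + β := by rw [hn]; ring
      _ ≤ 9 * (D:ℝ≥0∞) + 9 * (D:ℝ≥0∞) * β := add_le_add_right hβ9 _
      _ = 9 * (D:ℝ≥0∞) * (1 + β) := hfin
  · -- vertical edge
    show (tildeG G D).edist (Sum.inl 0) (Sum.inr (q.1.1, j)) +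
      (tildeG G D).edist (Sum.inr (q.1.2, j)) (Sum.inl 3) + 1 * (1 + β) ≤ _
    have hn : ((j.val : ℕ) : ℝ≥0∞) + ((D - j.val : ℕ) : ℝ≥0∞) = (D:ℝ≥0∞) := by
      rw [← Nat.cast_add]
      congr 1
      have := j.isLt
      omega
    calc _ ≤ (4 * (D:ℝ≥0∞) + ((j.val : ℕ) : ℝ≥0∞)) +
          (4 * (D:ℝ≥0∞) + ((D - j.val : ℕ) : ℝ≥0∞)) + 1 * (1 + β) :=
          add_le_add (add_le_add (tilde_dS G D _ _) (tilde_dT G D _ _)) le_rfl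
      _ = 8 * (D:ℝ≥0∞) + (((j.val : ℕ) : ℝ≥0∞) + ((D - j.val : ℕ) : ℝ≥0∞)) + (1 + β) := by ring
      _ = 9 * (D:ℝ≥0∞) + (1 + β) := by rw [hn]; ring
      _ ≤ 9 * (D:ℝ≥0∞) + 9 * (D:ℝ≥0∞) * β := add_le_add_right hβ _
      _ = 9 * (D:ℝ≥0∞) * (1 + β) := hfin
  · -- column edge
    show (tildeG G D).edist (Sum.inl 0) (Sum.inr (v, i.castSucc)) +
      (tildeG G D).edist (Sum.inr (v, i.succ)) (Sum.inl 3) + 1 * (1 + β) ≤ _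
    have hn : ((i.castSucc.val : ℕ) : ℝ≥0∞) + ((D - i.succ.val : ℕ) : ℝ≥0∞) + 1 = (D:ℝ≥0∞) := by
      rw [show ((1:ℝ≥0∞) = ((1:ℕ):ℝ≥0∞)) from by norm_num, ← Nat.cast_add, ← Nat.cast_add]
      congr 1
      have := i.isLt
      simp only [Fin.coe_castSucc, Fin.val_succ]
      omega
    calc _ ≤ (4 * (D:ℝ≥0∞) + ((i.castSucc.val : ℕ) : ℝ≥0∞)) +
          (4 * (D:ℝ≥0∞) + ((D - i.succ.val : ℕ) : ℝ≥0∞)) + 1 * (1 + β) :=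
          add_le_add (add_le_add (tilde_dS G D _ _) (tilde_dT G D _ _)) le_rfl
      _ = 8 * (D:ℝ≥0∞) + (((i.castSucc.val : ℕ) : ℝ≥0∞) + ((D - i.succ.val : ℕ) : ℝ≥0∞) + 1)
          + β := by ring
      _ = 9 * (D:ℝ≥0∞) + β := by rw [hn]; ring
      _ ≤ 9 * (D:ℝ≥0∞) + 9 * (D:ℝ≥0∞) * β := add_le_add_right hβ9 _
      _ = 9 * (D:ℝ≥0∞) * (1 + β) := hfin

end TildeFacts

section ElenFacts
open STGraph
variable {V : Type} [Fintype V] [LinearOrder V] (G : SimpleGraph V) [DecidableRel G.Adj]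
  (D : ℕ)

lemma tilde_elen_ne (hD : 1 ≤ D) (f : (tildeG G D).E) :
    (tildeG G D).elen f ≠ 0 ∧ (tildeG G D).elen f ≠ ⊤ := by
  have hd0 : (D : ℝ≥0∞) ≠ 0 := by
    have : D ≠ 0 := by omega
    exact_mod_cast this
  obtain (i | (x | y)) := f
  · constructor
    · show 3 * (D : ℝ≥0∞) ≠ 0
      simp [hd0]
    · show 3 * (D : ℝ≥0∞) ≠ ⊤
      exact ENNReal.mul_ne_top (by norm_num) (ENNReal.natCast_ne_top D)
  · exact ⟨hd0, ENNReal.natCast_ne_top D⟩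
  · exact ⟨one_ne_zero, ENNReal.one_ne_top⟩

lemma tilde_ts : (tildeG G D).t ≠ (tildeG G D).s := by
  show (Sum.inl 3 : TVert V D) ≠ Sum.inl 0
  simp

end ElenFacts

open STGraph in
/-- For a finite connected unweighted graph `G` with diameter `D ≥ 1` and `k ≥ 1`,
`tri(G̃^{⊘k}) ≤ len(G̃^{⊘k}) · (1 + 1/(9D − 1))`, where
`tri(G') = max_{v} (d(s,v) + d(v,t))`. -/
theorem tri_le {V : Type} [Fintype V] [LinearOrder V] (G : SimpleGraph V)
    [DecidableRel G.Adj] (hconn : G.Connected) (D : ℕ) (hD : 1 ≤ D)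
    (hdiam : IsDiameter G D) (k : ℕ) (hk : 1 ≤ k) :
    (⨆ v : (iterOslash (tildeG G D) k).V,
        ((iterOslash (tildeG G D) k).edist (iterOslash (tildeG G D) k).s v +
          (iterOslash (tildeG G D) k).edist v (iterOslash (tildeG G D) k).t)) ≤
      (iterOslash (tildeG G D) k).len * (1 + 1 / (9 * (D : ℝ≥0∞) - 1)) := by
  classical
  haveI hV : Nonempty V := hconn.nonempty
  set T := tildeG G D with hT
  set β : ℝ≥0∞ := 1 / (9 * (D : ℝ≥0∞) - 1) with hβ
  have hd1 : (1 : ℝ≥0∞) ≤ (D : ℝ≥0∞) := by exact_mod_cast hD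
  have hdt : (D : ℝ≥0∞) ≠ ⊤ := ENNReal.natCast_ne_top D
  have h91 : (1 : ℝ≥0∞) < 9 * (D : ℝ≥0∞) := by
    calc (1 : ℝ≥0∞) < 9 := by norm_num
      _ = 9 * 1 := by norm_num
      _ ≤ 9 * (D : ℝ≥0∞) := mul_le_mul_right hd1 _
  have h9t : 9 * (D : ℝ≥0∞) ≠ ⊤ := ENNReal.mul_ne_top (by norm_num) hdt
  have hsub0 : 9 * (D : ℝ≥0∞) - 1 ≠ 0 := by
    intro h
    exact absurd (tsub_eq_zero_iff_le.mp h) (not_le.mpr h91)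
  have hsubt : 9 * (D : ℝ≥0∞) - 1 ≠ ⊤ := by
    intro h
    exact h9t (top_le_iff.mp (h ▸ tsub_le_self : (⊤ : ℝ≥0∞) ≤ 9 * (D : ℝ≥0∞)))
  have hkey : 1 + β = 9 * (D : ℝ≥0∞) * β := by
    have hsub : 9 * (D : ℝ≥0∞) - 1 + 1 = 9 * (D : ℝ≥0∞) := tsub_add_cancel_of_le h91.le
    rw [hβ]
    calc 1 + 1 / (9 * (D : ℝ≥0∞) - 1)
        = (9 * (D : ℝ≥0∞) - 1) / (9 * (D : ℝ≥0∞) - 1) + 1 / (9 * (D : ℝ≥0∞) - 1) := by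
          rw [ENNReal.div_self hsub0 hsubt]
      _ = (9 * (D : ℝ≥0∞) - 1 + 1) / (9 * (D : ℝ≥0∞) - 1) := ENNReal.div_add_div_same
      _ = (9 * (D : ℝ≥0∞)) / (9 * (D : ℝ≥0∞) - 1) := by rw [hsub]
      _ = 9 * (D : ℝ≥0∞) * (1 / (9 * (D : ℝ≥0∞) - 1)) := by
          rw [div_eq_mul_inv, one_div]
  have hTlen : T.len = 9 * (D : ℝ≥0∞) := tilde_len G D
  have hd0 : (D : ℝ≥0∞) ≠ 0 := by
    have : D ≠ 0 := by omega
    exact_mod_cast this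
  have hTlen0 : T.len ≠ 0 := by
    rw [hTlen]; exact mul_ne_zero (by norm_num) hd0
  have hTlent : T.len ≠ ⊤ := by rw [hTlen]; exact h9t
  have hTst : T.t ≠ T.s := tilde_ts G D
  have hTelen : ∀ f, T.elen f ≠ 0 ∧ T.elen f ≠ ⊤ := tilde_elen_ne G D hD
  have main : ∀ n : ℕ,
      (1 ≤ (iterOslash T n).len) ∧
      (∀ e, (iterOslash T n).elen e ≠ 0 ∧ (iterOslash T n).elen e ≠ ⊤) ∧
      (∀ e, (iterOslash T n).edist (iterOslash T n).s ((iterOslash T n).ends e).1 +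
            (iterOslash T n).edist ((iterOslash T n).ends e).2 (iterOslash T n).t +
            (iterOslash T n).elen e * (1 + β) ≤ 1 + β) ∧
      (∀ x, (iterOslash T n).edist (iterOslash T n).s x +
            (iterOslash T n).edist x (iterOslash T n).t ≤ 1 + β) := by
    intro n
    induction n with
    | zero =>
      refine ⟨?_, ?_, ?_, ?_⟩
      · show (1 : ℝ≥0∞) ≤ unitEdge.len
        have hpot := potential_le (G := unitEdge) (fun b => if b = true then 1 else 0) ?_
          false true
        · simp at hpot; exact le_trans (le_of_eq (if_pos rfl).symm) hpot
        · intro e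
          constructor <;> simp [unitEdge]
      · intro e
        exact ⟨one_ne_zero, ENNReal.one_ne_top⟩
      · intro e
        show unitEdge.edist false false + unitEdge.edist true true + 1 * (1 + β) ≤ 1 + β
        rw [STGraph.edist_self (G := unitEdge) false, STGraph.edist_self (G := unitEdge) true, one_mul, zero_add, zero_add]
      · intro x
        have hle : unitEdge.edist false true ≤ 1 :=
          edist_le_elen (G := unitEdge) false true () (Or.inl rfl)
        cases x with
        | false =>
          show unitEdge.edist false false + unitEdge.edist false true ≤ 1 + β
          rw [STGraph.edist_self (G := unitEdge) false, zero_add]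
          exact hle.trans le_self_add
        | true =>
          show unitEdge.edist false true + unitEdge.edist true true ≤ 1 + β
          rw [STGraph.edist_self (G := unitEdge) true, add_zero]
          exact hle.trans le_self_add
    | succ n ih =>
      obtain ⟨ih1, ih2, ih3, ih4⟩ := ih
      simp only [iterOslash]
      set Hn := iterOslash T n with hHn
      have copy : ∀ (e : Hn.E) (a b : T.V),
          (Hn.oslash T).edist (endMap Hn T e a) (endMap Hn T e b) ≤
            (Hn.elen e / T.len) * T.edist a b := fun e a b =>
        oslash_copy_edist hTlen0 hTlent e (ih2 e).1 (ih2 e).2 a b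
      have inl_le : ∀ u v : Hn.V,
          (Hn.oslash T).edist (Sum.inl u) (Sum.inl v) ≤ Hn.edist u v := fun u v =>
        oslash_inl_edist_le hTlen0 hTlent hTst ih2 u v
      have hc9 : ∀ e : Hn.E, (Hn.elen e / T.len) * (9 * (D : ℝ≥0∞)) = Hn.elen e := by
        intro e
        rw [← hTlen]
        exact ENNReal.div_mul_cancel hTlen0 hTlent
      refine ⟨?_, ?_, ?_, ?_⟩
      · exact ih1.trans (oslash_len_ge hTlen0 hTlent)
      · rintro ⟨e, f⟩
        constructor
        · intro h
          have h' : Hn.elen e * T.elen f / T.len = 0 := h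
          rcases ENNReal.div_eq_zero_iff.mp h' with h'' | h''
          · exact mul_ne_zero (ih2 e).1 (hTelen f).1 h''
          · exact hTlent h''
        · intro h
          have h' : Hn.elen e * T.elen f / T.len = ⊤ := h
          rcases ENNReal.div_eq_top.mp h' with ⟨-, h2⟩ | ⟨h1, -⟩
          · exact hTlen0 h2
          · exact ENNReal.mul_ne_top (ih2 e).2 (hTelen f).2 h1
      · rintro ⟨e, f⟩
        set c := Hn.elen e / T.len with hc
        have hends : (Hn.oslash T).ends (e, f) =
            (endMap Hn T e (T.ends f).1, endMap Hn T e (T.ends f).2) := rfl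
        have d1 : (Hn.oslash T).edist (Hn.oslash T).s (endMap Hn T e (T.ends f).1) ≤
            Hn.edist Hn.s (Hn.ends e).1 + c * T.edist T.s (T.ends f).1 := by
          calc (Hn.oslash T).edist (Sum.inl Hn.s) (endMap Hn T e (T.ends f).1)
              ≤ (Hn.oslash T).edist (Sum.inl Hn.s) (Sum.inl (Hn.ends e).1) +
                (Hn.oslash T).edist (Sum.inl (Hn.ends e).1) (endMap Hn T e (T.ends f).1) :=
                edist_triangle _ _ _
            _ ≤ Hn.edist Hn.s (Hn.ends e).1 + c * T.edist T.s (T.ends f).1 := by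
                refine add_le_add (inl_le _ _) ?_
                rw [← endMap_s (G := T) e]
                exact copy e T.s (T.ends f).1
        have d2 : (Hn.oslash T).edist (endMap Hn T e (T.ends f).2) (Hn.oslash T).t ≤
            c * T.edist (T.ends f).2 T.t + Hn.edist (Hn.ends e).2 Hn.t := by
          calc (Hn.oslash T).edist (endMap Hn T e (T.ends f).2) (Sum.inl Hn.t)
              ≤ (Hn.oslash T).edist (endMap Hn T e (T.ends f).2) (Sum.inl (Hn.ends e).2) +
                (Hn.oslash T).edist (Sum.inl (Hn.ends e).2) (Sum.inl Hn.t) :=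
                edist_triangle _ _ _
            _ ≤ c * T.edist (T.ends f).2 T.t + Hn.edist (Hn.ends e).2 Hn.t := by
                refine add_le_add ?_ (inl_le _ _)
                rw [← endMap_t (G := T) e hTst]
                exact copy e (T.ends f).2 T.t
        have helen : (Hn.oslash T).elen (e, f) = c * T.elen f := oslash_elen' (e, f)
        calc (Hn.oslash T).edist (Hn.oslash T).s ((Hn.oslash T).ends (e, f)).1 +
              (Hn.oslash T).edist ((Hn.oslash T).ends (e, f)).2 (Hn.oslash T).t +
              (Hn.oslash T).elen (e, f) * (1 + β)
            ≤ (Hn.edist Hn.s (Hn.ends e).1 + c * T.edist T.s (T.ends f).1) +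
              (c * T.edist (T.ends f).2 T.t + Hn.edist (Hn.ends e).2 Hn.t) +
              (c * T.elen f) * (1 + β) := by
              rw [hends, helen]
              exact add_le_add (add_le_add d1 d2) le_rfl
          _ = Hn.edist Hn.s (Hn.ends e).1 + Hn.edist (Hn.ends e).2 Hn.t +
              c * (T.edist T.s (T.ends f).1 + T.edist (T.ends f).2 T.t +
                T.elen f * (1 + β)) := by ring
          _ ≤ Hn.edist Hn.s (Hn.ends e).1 + Hn.edist (Hn.ends e).2 Hn.t +
              c * (9 * (D : ℝ≥0∞) * (1 + β)) := by
              refine add_le_add_right (mul_le_mul_right ?_ c) _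
              exact tilde_edgeQ G D hD β hkey.le f
          _ = Hn.edist Hn.s (Hn.ends e).1 + Hn.edist (Hn.ends e).2 Hn.t +
              Hn.elen e * (1 + β) := by
              rw [← mul_assoc, hc9 e]
          _ ≤ 1 + β := ih3 e
      · rintro (w | ⟨e, wv, hw1, hw2⟩)
        · calc (Hn.oslash T).edist (Hn.oslash T).s (Sum.inl w) +
                (Hn.oslash T).edist (Sum.inl w) (Hn.oslash T).t
              ≤ Hn.edist Hn.s w + Hn.edist w Hn.t := add_le_add (inl_le _ _) (inl_le _ _)
            _ ≤ 1 + β := ih4 w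
        · set c := Hn.elen e / T.len with hc
          have hx : (Sum.inr (e, ⟨wv, hw1, hw2⟩) : (Hn.oslash T).V) = endMap Hn T e wv :=
            (endMap_inner e wv hw1 hw2).symm
          rw [hx]
          have d1 : (Hn.oslash T).edist (Hn.oslash T).s (endMap Hn T e wv) ≤
              Hn.edist Hn.s (Hn.ends e).1 + c * T.edist T.s wv := by
            calc (Hn.oslash T).edist (Sum.inl Hn.s) (endMap Hn T e wv)
                ≤ (Hn.oslash T).edist (Sum.inl Hn.s) (Sum.inl (Hn.ends e).1) +
                  (Hn.oslash T).edist (Sum.inl (Hn.ends e).1) (endMap Hn T e wv) :=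
                  edist_triangle _ _ _
              _ ≤ _ := by
                  refine add_le_add (inl_le _ _) ?_
                  rw [← endMap_s (G := T) e]
                  exact copy e T.s wv
          have d2 : (Hn.oslash T).edist (endMap Hn T e wv) (Hn.oslash T).t ≤
              c * T.edist wv T.t + Hn.edist (Hn.ends e).2 Hn.t := by
            calc (Hn.oslash T).edist (endMap Hn T e wv) (Sum.inl Hn.t)
                ≤ (Hn.oslash T).edist (endMap Hn T e wv) (Sum.inl (Hn.ends e).2) +
                  (Hn.oslash T).edist (Sum.inl (Hn.ends e).2) (Sum.inl Hn.t) :=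
                  edist_triangle _ _ _
              _ ≤ _ := by
                  refine add_le_add ?_ (inl_le _ _)
                  rw [← endMap_t (G := T) e hTst]
                  exact copy e wv T.t
          calc (Hn.oslash T).edist (Hn.oslash T).s (endMap Hn T e wv) +
                (Hn.oslash T).edist (endMap Hn T e wv) (Hn.oslash T).t
              ≤ (Hn.edist Hn.s (Hn.ends e).1 + c * T.edist T.s wv) +
                (c * T.edist wv T.t + Hn.edist (Hn.ends e).2 Hn.t) := add_le_add d1 d2
            _ = Hn.edist Hn.s (Hn.ends e).1 + Hn.edist (Hn.ends e).2 Hn.t +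
                c * (T.edist T.s wv + T.edist wv T.t) := by ring
            _ ≤ Hn.edist Hn.s (Hn.ends e).1 + Hn.edist (Hn.ends e).2 Hn.t +
                c * (9 * (D : ℝ≥0∞)) := by
                refine add_le_add_right (mul_le_mul_right ?_ c) _
                exact tilde_tri G D wv
            _ = Hn.edist Hn.s (Hn.ends e).1 + Hn.edist (Hn.ends e).2 Hn.t +
                Hn.elen e := by rw [hc9 e]
            _ ≤ Hn.edist Hn.s (Hn.ends e).1 + Hn.edist (Hn.ends e).2 Hn.t +
                Hn.elen e * (1 + β) := by
                refine add_le_add_right ?_ _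
                calc Hn.elen e = Hn.elen e * 1 := (mul_one _).symm
                  _ ≤ Hn.elen e * (1 + β) := mul_le_mul_right le_self_add _
            _ ≤ 1 + β := ih3 e
  obtain ⟨h1, -, -, h4⟩ := main k
  calc (⨆ v : (iterOslash T k).V,
        ((iterOslash T k).edist (iterOslash T k).s v +
          (iterOslash T k).edist v (iterOslash T k).t)) ≤ 1 + β := iSup_le h4
    _ = 1 * (1 + β) := (one_mul _).symm
    _ ≤ (iterOslash T k).len * (1 + β) := mul_le_mul_left h1 _
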